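/- arXiv:2109.05717 — 6 statements merged into one kernel-verified Lean document; each statement's English description precedes it below -/
import Mathlib

section
/- Let H be a finite-dimensional complex vector space equipped with a conjugation σ (an ℝ-linear involution of H satisfying σ(c·v) = conj(c)·σ(v) for all c ∈ ℂ, v ∈ H). Suppose H = ⊕_{(p,q) ∈ ℤ×ℤ} I^{p,q} is an internal direct sum decomposition by complex subspaces such that, for a fixed integer w, I^{p,q} = 0 unless p+q = w−1 or p+q = w, and such that σ(I^{p,q}) ⊆ I^{q,p} + Σ_{k<p, l<q} I^{k,l} for all p, q. Then σ(I^{p,q}) = I^{q,p} for all p, q. (This is the paper's Proposition 2.3: a mixed Hodge structure whose weights are concentrated on two consecutive levels w−1 and w is ℝ-split.) -/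
/-- **Paper's Proposition 2.3.** A mixed Hodge structure whose weights are concentrated
on two consecutive levels `w-1` and `w` is ℝ-split: if `σ` is a conjugation on `H`,
`H = ⊕ I^{p,q}` with `I^{p,q} = 0` unless `p+q ∈ {w-1, w}`, and
`σ(I^{p,q}) ⊆ I^{q,p} + Σ_{k<p,l<q} I^{k,l}`, then `σ(I^{p,q}) = I^{q,p}`. -/
theorem rSplit_of_two_consecutive_weights
    {H : Type*} [AddCommGroup H] [Module ℂ H] [Module ℝ H]
    [IsScalarTower ℝ ℂ H] [FiniteDimensional ℂ H]
    (σ : H →ₗ[ℝ] H)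
    (hσinv : ∀ v, σ (σ v) = v)
    (hσconj : ∀ (c : ℂ) (v : H), σ (c • v) = (starRingEnd ℂ) c • σ v)
    (w : ℤ) (I : ℤ × ℤ → Submodule ℂ H)
    (hI : DirectSum.IsInternal I)
    (hw : ∀ p q : ℤ, p + q ≠ w - 1 → p + q ≠ w → I (p, q) = ⊥)
    (hconj : ∀ p q : ℤ, ∀ v ∈ I (p, q),
      σ v ∈ I (q, p) ⊔ ⨆ (k : ℤ) (_ : k < p), ⨆ (l : ℤ) (_ : l < q), I (k, l)) :
    ∀ p q : ℤ, Submodule.map σ ((I (p, q)).restrictScalars ℝ)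
      = (I (q, p)).restrictScalars ℝ := by
  -- Key: σ maps I(p,q) into I(q,p).
  have key : ∀ p q : ℤ, ∀ v ∈ I (p, q), σ v ∈ I (q, p) := by
    intro p q v hv
    by_cases hpq : p + q = w - 1 ∨ p + q = w
    · -- The error terms vanish: k + l ≤ p + q - 2 ≤ w - 2.
      have hsup : (⨆ (k : ℤ) (_ : k < p), ⨆ (l : ℤ) (_ : l < q), I (k, l)) = ⊥ := by
        simp only [iSup_eq_bot]
        intro k hk l hl
        apply hw
        · omega
        · omega
      have := hconj p q v hv
      rwa [hsup, sup_bot_eq] at this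
    · push_neg at hpq
      have : I (p, q) = ⊥ := hw p q hpq.1 hpq.2
      rw [this, Submodule.mem_bot] at hv
      subst hv
      simp
  intro p q
  apply le_antisymm
  · rintro x ⟨v, hv, rfl⟩
    exact key p q v hv
  · intro u hu
    exact ⟨σ u, key q p u hu, hσinv u⟩
end

section
/- Let A and B be finite-dimensional complex vector spaces with conjugations σ_A and σ_B. Fix an integer n. Suppose A = ⊕_{(p,q)} K^{p,q} is an internal direct sum decomposition with K^{p,q} = 0 whenever p+q > n and σ_A(K^{p,q}) = K^{q,p} for all p,q, and B = ⊕_{(p,q)} J^{p,q} is an internal direct sum decomposition with J^{p,q} = 0 whenever p+q ≤ n and σ_B(J^{p,q}) = J^{q,p} for all p,q. Define F^p A = ⊕_{k ≥ p, l} K^{k,l} and F^p B = ⊕_{k ≥ p, l} J^{k,l}. If T : B → A is a ℂ-linear map satisfying T ∘ σ_B = σ_A ∘ T and T(F^p B) ⊆ F^p A for every p ∈ ℤ, then T = 0. (This is the uniqueness part of the paper's Proposition 2.4: Deligne's ℝ-linear section of an extension of ℝ-split mixed Hodge structures is unique.) -/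
section Aux

variable {R N : Type*} [Ring R] [AddCommGroup N] [Module R N]

/-- If a family of submodules is independent and every index satisfying both predicates
carries the trivial submodule, then the two bounded suprema are disjoint. -/
lemma aux_disjoint_biSup_biSup {ι : Type*} {p : ι → Submodule R N}
    (h : iSupIndep p) (P Q : ι → Prop) (hPQ : ∀ i, P i → Q i → p i = ⊥) :
    Disjoint (⨆ (i) (_ : P i), p i) (⨆ (i) (_ : Q i), p i) := by
  classical
  rw [Submodule.disjoint_def]
  intro x hxP hxQ
  rw [Submodule.mem_biSup_iff_exists_dfinsupp] at hxP hxQ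
  obtain ⟨f, hf⟩ := hxP
  obtain ⟨g, hg⟩ := hxQ
  have hinj := h.dfinsupp_lsum_injective
  have heq : f.filter P = g.filter Q := hinj (hf.trans hg.symm)
  have hfP : f.filter P = 0 := by
    ext i
    by_cases hPi : P i
    · by_cases hQi : Q i
      · have hbot := hPQ i hPi hQi
        have h2 : ((f.filter P) i : N) ∈ p i := ((f.filter P) i).2
        simpa using (Submodule.eq_bot_iff _).mp hbot _ h2
      · have := congrArg (fun v => v i) heq
        simpa [DFinsupp.filter_apply, hPi, hQi] using this
    · simp [DFinsupp.filter_apply, hPi]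
  rw [← hf, hfP, map_zero]

end Aux

section Aux2

variable {A : Type*} [AddCommGroup A] [Module ℂ A] [Module ℝ A] [IsScalarTower ℝ ℂ A]

/-- Reindexing a double bounded supremum over a product type. -/
lemma aux_biSup_prod (K : ℤ × ℤ → Submodule ℂ A) (p : ℤ) :
    (⨆ (k : ℤ) (_ : p ≤ k), ⨆ (l : ℤ), K (k, l))
      = ⨆ (i : ℤ × ℤ) (_ : p ≤ i.1), K i := by
  apply le_antisymm
  · exact iSup₂_le fun k hk => iSup_le fun l => le_iSup₂_of_le (k, l) hk le_rfl
  · exact iSup₂_le fun i hi => le_iSup₂_of_le i.1 hi (le_iSup_of_le i.2 le_rfl)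

/-- A conjugation swapping the pieces of a decomposition maps a bounded supremum into the
bounded supremum with swapped condition. -/
lemma aux_conj_mem_biSup (σ : A →ₗ[ℝ] A) (K : ℤ × ℤ → Submodule ℂ A)
    (hconj : ∀ p q : ℤ,
      Submodule.map σ ((K (p, q)).restrictScalars ℝ) = (K (q, p)).restrictScalars ℝ)
    (P : ℤ × ℤ → Prop) {x : A} (hx : x ∈ ⨆ (i) (_ : P i), K i) :
    σ x ∈ ⨆ (i : ℤ × ℤ) (_ : P (i.2, i.1)), K i := by
  refine Submodule.iSup_induction (p := fun i => ⨆ (_ : P i), K i)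
    (motive := fun a => σ a ∈ ((⨆ (i : ℤ × ℤ) (_ : P (i.2, i.1)), K i :
      Submodule ℂ A) : Set A)) hx ?_ ?_ ?_
  · intro i a ha
    by_cases hPi : P i
    · try dsimp only at ha
      rw [iSup_pos hPi] at ha
      have h1 : σ a ∈ Submodule.map σ ((K (i.1, i.2)).restrictScalars ℝ) :=
        ⟨a, ha, rfl⟩
      rw [hconj] at h1
      have h2 : σ a ∈ ⨆ (_ : P ((i.2, i.1).2, (i.2, i.1).1)), K (i.2, i.1) := by
        rw [iSup_pos hPi]; exact h1
      exact Submodule.mem_iSup_of_mem (i.2, i.1) h2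
    · try dsimp only at ha
      rw [iSup_neg hPi, Submodule.mem_bot] at ha
      simp [ha]
  · simp
  · intro a b ha hb
    simpa [map_add] using add_mem ha hb

end Aux2

/-- **Uniqueness part of the paper's Proposition 2.4.** If `A` has an ℝ-split
decomposition concentrated in total degrees `≤ n` and `B` has an ℝ-split
decomposition concentrated in total degrees `> n`, then any ℂ-linear map
`T : B → A` that is defined over ℝ (commutes with the conjugations) and
preserves the Hodge filtrations is zero. Hence Deligne's ℝ-linear section of an
extension of ℝ-split mixed Hodge structures is unique. -/
theorem deligne_real_section_unique
    {A B : Type*}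
    [AddCommGroup A] [Module ℂ A] [Module ℝ A] [IsScalarTower ℝ ℂ A]
    [FiniteDimensional ℂ A]
    [AddCommGroup B] [Module ℂ B] [Module ℝ B] [IsScalarTower ℝ ℂ B]
    [FiniteDimensional ℂ B]
    (σA : A →ₗ[ℝ] A) (σB : B →ₗ[ℝ] B)
    (hσAinv : ∀ a, σA (σA a) = a)
    (hσAconj : ∀ (c : ℂ) (a : A), σA (c • a) = (starRingEnd ℂ) c • σA a)
    (hσBinv : ∀ b, σB (σB b) = b)
    (hσBconj : ∀ (c : ℂ) (b : B), σB (c • b) = (starRingEnd ℂ) c • σB b)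
    (n : ℤ)
    (K : ℤ × ℤ → Submodule ℂ A) (hK : DirectSum.IsInternal K)
    (hKn : ∀ p q : ℤ, n < p + q → K (p, q) = ⊥)
    (hKconj : ∀ p q : ℤ,
      Submodule.map σA ((K (p, q)).restrictScalars ℝ) = (K (q, p)).restrictScalars ℝ)
    (J : ℤ × ℤ → Submodule ℂ B) (hJ : DirectSum.IsInternal J)
    (hJn : ∀ p q : ℤ, p + q ≤ n → J (p, q) = ⊥)
    (hJconj : ∀ p q : ℤ,
      Submodule.map σB ((J (p, q)).restrictScalars ℝ) = (J (q, p)).restrictScalars ℝ)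
    (T : B →ₗ[ℂ] A)
    (hTσ : ∀ b, T (σB b) = σA (T b))
    (hTF : ∀ p : ℤ, ∀ x ∈ (⨆ (k : ℤ) (_ : p ≤ k), ⨆ (l : ℤ), J (k, l)),
      T x ∈ (⨆ (k : ℤ) (_ : p ≤ k), ⨆ (l : ℤ), K (k, l))) :
    T = 0 := by
  have key : ∀ (i : ℤ × ℤ), ∀ b ∈ J i, T b = 0 := by
    rintro ⟨p, q⟩ b hb
    by_cases hpq : p + q ≤ n
    · rw [hJn p q hpq, Submodule.mem_bot] at hb
      simp [hb]
    push_neg at hpq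
    -- T b lies in F^p A
    have h1 : T b ∈ ⨆ (i : ℤ × ℤ) (_ : p ≤ i.1), K i := by
      rw [← aux_biSup_prod K p]
      apply hTF p
      rw [aux_biSup_prod J p]
      have hb' : b ∈ ⨆ (_ : p ≤ ((p, q) : ℤ × ℤ).1), J (p, q) := by
        rw [iSup_pos le_rfl]; exact hb
      exact Submodule.mem_iSup_of_mem (p, q) hb'
    -- σB b ∈ J (q, p)
    have hσb : σB b ∈ J (q, p) := by
      have h2 : σB b ∈ Submodule.map σB ((J (p, q)).restrictScalars ℝ) := ⟨b, hb, rfl⟩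
      rw [hJconj] at h2
      exact h2
    -- T (σB b) ∈ F^q A
    have h2 : T (σB b) ∈ ⨆ (i : ℤ × ℤ) (_ : q ≤ i.1), K i := by
      rw [← aux_biSup_prod K q]
      apply hTF q
      rw [aux_biSup_prod J q]
      have hb' : σB b ∈ ⨆ (_ : q ≤ ((q, p) : ℤ × ℤ).1), J (q, p) := by
        rw [iSup_pos le_rfl]; exact hσb
      exact Submodule.mem_iSup_of_mem (q, p) hb'
    -- hence T b = σA (T (σB b)) lies in the conjugate filtration
    have h3 : T b ∈ ⨆ (i : ℤ × ℤ) (_ : q ≤ i.2), K i := by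
      have h4 := aux_conj_mem_biSup σA K hKconj (fun i => q ≤ i.1) h2
      rw [hTσ, hσAinv] at h4
      exact h4
    -- the two filtrations are disjoint
    have hdisj : Disjoint (⨆ (i : ℤ × ℤ) (_ : p ≤ i.1), K i)
        (⨆ (i : ℤ × ℤ) (_ : q ≤ i.2), K i) := by
      apply aux_disjoint_biSup_biSup hK.submodule_iSupIndep
      intro i hi1 hi2
      exact hKn i.1 i.2 (lt_of_lt_of_le hpq (add_le_add hi1 hi2))
    exact (Submodule.disjoint_def.mp hdisj) _ h1 h3
  -- conclude by the direct sum decomposition of B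
  ext b
  have hb : b ∈ iSup J := by rw [hJ.submodule_iSup_eq_top]; trivial
  simp only [LinearMap.zero_apply]
  refine Submodule.iSup_induction (p := J) (motive := fun x => T x = 0) hb
    (fun i x hx => key i x hx) (by simp) ?_
  intro x y hx hy
  simp [map_add, hx, hy]
end

section
/- Let A, E, B be finite-dimensional complex vector spaces with conjugations σ_A, σ_E, σ_B. Let f : A → E and g : E → B be ℂ-linear maps with f ∘ σ_A = σ_E ∘ f and g ∘ σ_E = σ_B ∘ g, such that f is injective, g is surjective, and range f = ker g. Fix an integer n, and suppose E = ⊕_{(p,q)} I^{p,q} is an internal direct sum decomposition with σ_E(I^{p,q}) = I^{q,p} for all p,q and with range f = ⊕_{p+q ≤ n} I^{p,q}. Then there exists a ℂ-linear map s : B → E such that g ∘ s = id_B, s ∘ σ_B = σ_E ∘ s, and s(g(I^{p,q})) = I^{p,q} for every (p,q) with p+q > n; in particular s maps F^p B := ⊕_{k ≥ p, l} g(I^{k,l}) into F^p E := ⊕_{k ≥ p, l} I^{k,l} for every p ∈ ℤ. (This is the existence direction of the paper's Proposition 2.4: if the extension E of ℝ-split mixed Hodge structures is itself ℝ-split, there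 is an ℝ-linear section whose complexification preserves Hodge filtrations.) -/
lemma aux_biSup_disjoint {R M ι : Type*} [Ring R] [AddCommGroup M] [Module R M] [DecidableEq ι]
    {S : ι → Submodule R M} (hS : iSupIndep S) (p q : ι → Prop) [DecidablePred p]
    [DecidablePred q] (hpq : ∀ i, p i → q i → False) :
    Disjoint (⨆ i, ⨆ (_ : p i), S i) (⨆ i, ⨆ (_ : q i), S i) := by
  rw [Submodule.disjoint_def]
  intro x hx1 hx2
  rw [Submodule.mem_biSup_iff_exists_dfinsupp] at hx1 hx2
  obtain ⟨f1, hf1⟩ := hx1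
  obtain ⟨f2, hf2⟩ := hx2
  have heq : f1.filter p = f2.filter q := hS.dfinsupp_lsum_injective (hf1.trans hf2.symm)
  have hzero : f1.filter p = 0 := by
    ext i
    by_cases hp : p i
    · by_cases hq : q i
      · exact absurd hq fun h => hpq i hp h
      · have := DFunLike.congr_fun heq i
        simpa [DFinsupp.filter_apply, hp, hq] using this
    · simp [DFinsupp.filter_apply, hp]
  rw [hzero] at hf1
  simpa using hf1.symm

/-- **Existence direction of the paper's Proposition 2.4.** Let
`0 → A →f E →g B → 0` be an exact sequence of finite-dimensional complex vector
spaces with conjugations, with `f`, `g` defined over ℝ. If `E` carries an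
ℝ-split decomposition `E = ⊕ I^{p,q}` (i.e. `σ_E(I^{p,q}) = I^{q,p}`) with
`range f = ⊕_{p+q ≤ n} I^{p,q}`, then there is a ℂ-linear section `s` of `g`
defined over ℝ which maps `g(I^{p,q})` onto `I^{p,q}` for `p+q > n`; in
particular `s` preserves the Hodge filtrations. -/
theorem deligne_real_section_exists
    {A E B : Type*}
    [AddCommGroup A] [Module ℂ A] [Module ℝ A] [IsScalarTower ℝ ℂ A]
    [FiniteDimensional ℂ A]
    [AddCommGroup E] [Module ℂ E] [Module ℝ E] [IsScalarTower ℝ ℂ E]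
    [FiniteDimensional ℂ E]
    [AddCommGroup B] [Module ℂ B] [Module ℝ B] [IsScalarTower ℝ ℂ B]
    [FiniteDimensional ℂ B]
    (σA : A →ₗ[ℝ] A) (σE : E →ₗ[ℝ] E) (σB : B →ₗ[ℝ] B)
    (hσAinv : ∀ a, σA (σA a) = a)
    (hσAconj : ∀ (c : ℂ) (a : A), σA (c • a) = (starRingEnd ℂ) c • σA a)
    (hσEinv : ∀ e, σE (σE e) = e)
    (hσEconj : ∀ (c : ℂ) (e : E), σE (c • e) = (starRingEnd ℂ) c • σE e)
    (hσBinv : ∀ b, σB (σB b) = b)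
    (hσBconj : ∀ (c : ℂ) (b : B), σB (c • b) = (starRingEnd ℂ) c • σB b)
    (f : A →ₗ[ℂ] E) (g : E →ₗ[ℂ] B)
    (hfσ : ∀ a, f (σA a) = σE (f a))
    (hgσ : ∀ e, g (σE e) = σB (g e))
    (hf : Function.Injective f) (hg : Function.Surjective g)
    (hfg : LinearMap.range f = LinearMap.ker g)
    (n : ℤ)
    (I : ℤ × ℤ → Submodule ℂ E) (hI : DirectSum.IsInternal I)
    (hIconj : ∀ p q : ℤ,
      Submodule.map σE ((I (p, q)).restrictScalars ℝ) = (I (q, p)).restrictScalars ℝ)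
    (hrange : LinearMap.range f = ⨆ (pq : ℤ × ℤ) (_ : pq.1 + pq.2 ≤ n), I pq) :
    ∃ s : B →ₗ[ℂ] E,
      g.comp s = LinearMap.id ∧
      (∀ b, s (σB b) = σE (s b)) ∧
      (∀ p q : ℤ, n < p + q →
        Submodule.map s (Submodule.map g (I (p, q))) = I (p, q)) ∧
      (∀ p : ℤ, ∀ x ∈ (⨆ (k : ℤ) (_ : p ≤ k), ⨆ (l : ℤ), Submodule.map g (I (k, l))),
        s x ∈ (⨆ (k : ℤ) (_ : p ≤ k), ⨆ (l : ℤ), I (k, l))) := by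
  classical
  set Wlo : Submodule ℂ E := ⨆ (pq : ℤ × ℤ) (_ : pq.1 + pq.2 ≤ n), I pq with hWlo
  set W : Submodule ℂ E := ⨆ (pq : ℤ × ℤ) (_ : n < pq.1 + pq.2), I pq with hW
  have hIW : ∀ pq : ℤ × ℤ, n < pq.1 + pq.2 → I pq ≤ W := fun pq h =>
    le_iSup₂ (f := fun pq (_ : n < pq.1 + pq.2) => I pq) pq h
  have hker : LinearMap.ker g = Wlo := hfg.symm.trans hrange
  have hdisj : Disjoint Wlo W :=
    aux_biSup_disjoint hI.submodule_iSupIndep _ _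
      (fun pq h1 h2 => absurd h1 (not_le.mpr h2))
  have hsup : Wlo ⊔ W = ⊤ := by
    rw [eq_top_iff, ← hI.submodule_iSup_eq_top]
    refine iSup_le fun pq => ?_
    by_cases h : pq.1 + pq.2 ≤ n
    · exact le_sup_of_le_left (le_iSup₂ (f := fun pq (_ : pq.1 + pq.2 ≤ n) => I pq) pq h)
    · exact le_sup_of_le_right (hIW pq (not_le.mp h))
  -- uniqueness of preimages in W
  have huniq : ∀ x ∈ W, ∀ y ∈ W, g x = g y → x = y := by
    intro x hx y hy hxy
    have h1 : x - y ∈ W := sub_mem hx hy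
    have h2 : x - y ∈ Wlo := by
      rw [← hker]
      simp [LinearMap.mem_ker, map_sub, hxy]
    have := Submodule.disjoint_def.mp hdisj _ h2 h1
    exact sub_eq_zero.mp this
  -- g restricted to W is bijective
  set g' : W →ₗ[ℂ] B := g.comp W.subtype with hg'
  have hg'inj : Function.Injective g' := by
    intro x y hxy
    exact Subtype.ext (huniq x x.2 y y.2 hxy)
  have hg'surj : Function.Surjective g' := by
    intro b
    obtain ⟨x, hx⟩ := hg b
    have hxtop : x ∈ Wlo ⊔ W := by rw [hsup]; trivial
    obtain ⟨u, hu, w, hw, rfl⟩ := Submodule.mem_sup.mp hxtop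
    have hgu : g u = 0 := by rw [← LinearMap.mem_ker, hker]; exact hu
    refine ⟨⟨w, hw⟩, ?_⟩
    simp only [hg', LinearMap.comp_apply, Submodule.subtype_apply]
    rw [← hx, map_add, hgu, zero_add]
  set eW : W ≃ₗ[ℂ] B := LinearEquiv.ofBijective g' ⟨hg'inj, hg'surj⟩ with heW
  set s : B →ₗ[ℂ] E := W.subtype.comp eW.symm.toLinearMap with hs
  have hsW : ∀ b, s b ∈ W := fun b => (eW.symm b).2
  have hgs : ∀ b, g (s b) = b := fun b => eW.apply_symm_apply b
  have hsg : ∀ w ∈ W, s (g w) = w := by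
    intro w hw
    exact huniq _ (hsW _) w hw (hgs (g w))
  -- σE maps W to W
  have hσW : ∀ x ∈ W, σE x ∈ W := by
    intro x hx
    have hle : W ≤ ⨆ pq : {pq : ℤ × ℤ // n < pq.1 + pq.2}, I pq := by
      rw [hW]
      exact iSup₂_le fun pq h =>
        le_iSup (fun pq : {pq : ℤ × ℤ // n < pq.1 + pq.2} => I ↑pq) ⟨pq, h⟩
    have hx' : x ∈ ⨆ pq : {pq : ℤ × ℤ // n < pq.1 + pq.2}, I pq := hle hx
    refine Submodule.iSup_induction (motive := fun y => σE y ∈ W) _ hx' ?_ (by simp) ?_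
    · rintro ⟨⟨p, q⟩, hpq⟩ y hy
      have : σE y ∈ Submodule.map σE ((I (p, q)).restrictScalars ℝ) :=
        Submodule.mem_map_of_mem hy
      rw [hIconj p q] at this
      exact hIW (q, p) (by simpa [add_comm] using hpq) this
    · intro y z hy hz
      rw [map_add]
      exact add_mem hy hz
  refine ⟨s, ?_, ?_, ?_, ?_⟩
  · ext b
    simp [hgs b]
  · intro b
    refine huniq _ (hsW _) _ (hσW _ (hsW b)) ?_
    rw [hgs, hgσ, hgs]
  · intro p q hpq
    apply le_antisymm
    · rintro x hx
      obtain ⟨z, hz, rfl⟩ := hx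
      obtain ⟨y, hy, rfl⟩ := hz
      rw [hsg y (hIW (p, q) hpq hy)]
      exact hy
    · intro x hx
      have : g x ∈ Submodule.map g (I (p, q)) := Submodule.mem_map_of_mem hx
      refine ⟨g x, this, ?_⟩
      exact hsg x (hIW (p, q) hpq hx)
  · intro p x hx
    have hmap : Submodule.map s (⨆ (k : ℤ) (_ : p ≤ k), ⨆ (l : ℤ), Submodule.map g (I (k, l)))
        ≤ ⨆ (k : ℤ) (_ : p ≤ k), ⨆ (l : ℤ), I (k, l) := by
      simp only [Submodule.map_iSup]
      refine iSup₂_le fun k hk => iSup_le fun l => ?_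
      by_cases hkl : n < k + l
      · have heq : Submodule.map s (Submodule.map g (I (k, l))) = I (k, l) := by
          apply le_antisymm
          · rintro x hx
            obtain ⟨z, hz, rfl⟩ := hx
            obtain ⟨y, hy, rfl⟩ := hz
            rw [hsg y (hIW (k, l) hkl hy)]
            exact hy
          · intro x hx
            exact ⟨g x, Submodule.mem_map_of_mem hx, hsg x (hIW (k, l) hkl hx)⟩
        rw [heq]
        exact le_trans (le_iSup (fun l => I (k, l)) l)
          (le_iSup₂ (f := fun k (_ : p ≤ k) => ⨆ l, I (k, l)) k hk)
      · have hle : I (k, l) ≤ LinearMap.ker g := by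
          rw [hker, hWlo]
          exact le_iSup₂ (f := fun pq (_ : pq.1 + pq.2 ≤ n) => I pq) (k, l) (not_lt.mp hkl)
        have hbot : Submodule.map g (I (k, l)) = ⊥ := by
          rw [eq_bot_iff]
          rintro y ⟨z, hz, rfl⟩
          simpa using hle hz
        rw [hbot]
        simp
    exact hmap ⟨x, hx, rfl⟩
end

section
/- Let A, E, B be finite-dimensional complex vector spaces with conjugations σ_A, σ_E, σ_B. Let f : A → E and g : E → B be ℂ-linear maps with f ∘ σ_A = σ_E ∘ f and g ∘ σ_E = σ_B ∘ g, such that f is injective, g is surjective, and range f = ker g. Suppose A = ⊕_{(p,q)} K^{p,q} and B = ⊕_{(p,q)} J^{p,q} are internal direct sum decompositions with σ_A(K^{p,q}) = K^{q,p} and σ_B(J^{p,q}) = J^{q,p} for all p,q. Let s : B → E be a ℂ-linear map with g ∘ s = id_B and s ∘ σ_B = σ_E ∘ s. Then the subspaces I^{p,q} := f(K^{p,q}) + s(J^{p,q}) form an internal direct sum decomposition E = ⊕_{(p,q)} I^{p,q} satisfying σ_E(I^{p,q}) = I^{q,p} for all p,q. (This is the converse direction of the paper's Proposition 2.4: an ℝ-linear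 section whose complexification is compatible with the decompositions makes the extension E ℝ-split.) -/
section Aux

variable {R S M N : Type*} [Semiring R] [Semiring S] [AddCommMonoid M] [AddCommMonoid N]
  [Module R M] [Module R N] [Module S M] [Module S N]
  [SMul S R] [IsScalarTower S R M] [IsScalarTower S R N]

lemma my_restrictScalars_sup (p q : Submodule R M) :
    (p ⊔ q).restrictScalars S = p.restrictScalars S ⊔ q.restrictScalars S := by
  refine le_antisymm ?_ (sup_le (fun x hx => Submodule.mem_sup_left hx)
    (fun x hx => Submodule.mem_sup_right hx))
  intro x hx
  rw [Submodule.restrictScalars_mem] at hx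
  rcases Submodule.mem_sup.mp hx with ⟨y, hy, z, hz, rfl⟩
  exact Submodule.add_mem _ (Submodule.mem_sup_left hy) (Submodule.mem_sup_right hz)

lemma my_restrictScalars_map (f : M →ₗ[R] N) (p : Submodule R M) :
    (p.map f).restrictScalars S = (p.restrictScalars S).map (f.restrictScalars S) := by
  ext x
  simp [Submodule.mem_map]

end Aux

/-- **Converse direction of the paper's Proposition 2.4.** Let
`0 → A →f E →g B → 0` be an exact sequence of finite-dimensional complex vector
spaces with conjugations, with `f`, `g` defined over ℝ, and let `A = ⊕ K^{p,q}`
and `B = ⊕ J^{p,q}` be ℝ-split decompositions. If `s : B → E` is a ℂ-linear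
section of `g` defined over ℝ, then the subspaces `I^{p,q} = f(K^{p,q}) + s(J^{p,q})`
form an internal direct sum decomposition of `E` with `σ_E(I^{p,q}) = I^{q,p}`,
i.e. the extension `E` is ℝ-split. -/
theorem rSplit_of_real_section
    {A E B : Type*}
    [AddCommGroup A] [Module ℂ A] [Module ℝ A] [IsScalarTower ℝ ℂ A]
    [FiniteDimensional ℂ A]
    [AddCommGroup E] [Module ℂ E] [Module ℝ E] [IsScalarTower ℝ ℂ E]
    [FiniteDimensional ℂ E]
    [AddCommGroup B] [Module ℂ B] [Module ℝ B] [IsScalarTower ℝ ℂ B]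
    [FiniteDimensional ℂ B]
    (σA : A →ₗ[ℝ] A) (σE : E →ₗ[ℝ] E) (σB : B →ₗ[ℝ] B)
    (hσAinv : ∀ a, σA (σA a) = a)
    (hσAconj : ∀ (c : ℂ) (a : A), σA (c • a) = (starRingEnd ℂ) c • σA a)
    (hσEinv : ∀ e, σE (σE e) = e)
    (hσEconj : ∀ (c : ℂ) (e : E), σE (c • e) = (starRingEnd ℂ) c • σE e)
    (hσBinv : ∀ b, σB (σB b) = b)
    (hσBconj : ∀ (c : ℂ) (b : B), σB (c • b) = (starRingEnd ℂ) c • σB b)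
    (f : A →ₗ[ℂ] E) (g : E →ₗ[ℂ] B)
    (hfσ : ∀ a, f (σA a) = σE (f a))
    (hgσ : ∀ e, g (σE e) = σB (g e))
    (hf : Function.Injective f) (hg : Function.Surjective g)
    (hfg : LinearMap.range f = LinearMap.ker g)
    (K : ℤ × ℤ → Submodule ℂ A) (hK : DirectSum.IsInternal K)
    (hKconj : ∀ p q : ℤ,
      Submodule.map σA ((K (p, q)).restrictScalars ℝ) = (K (q, p)).restrictScalars ℝ)
    (J : ℤ × ℤ → Submodule ℂ B) (hJ : DirectSum.IsInternal J)
    (hJconj : ∀ p q : ℤ,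
      Submodule.map σB ((J (p, q)).restrictScalars ℝ) = (J (q, p)).restrictScalars ℝ)
    (s : B →ₗ[ℂ] E)
    (hs : g.comp s = LinearMap.id)
    (hsσ : ∀ b, s (σB b) = σE (s b)) :
    DirectSum.IsInternal
      (fun pq : ℤ × ℤ => Submodule.map f (K pq) ⊔ Submodule.map s (J pq)) ∧
    (∀ p q : ℤ,
      Submodule.map σE
        ((Submodule.map f (K (p, q)) ⊔ Submodule.map s (J (p, q))).restrictScalars ℝ)
      = (Submodule.map f (K (q, p)) ⊔ Submodule.map s (J (q, p))).restrictScalars ℝ) := by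
  have hgs : ∀ b, g (s b) = b := fun b => by simpa using LinearMap.congr_fun hs b
  have hgf : ∀ a, g (f a) = 0 := fun a => by
    have : f a ∈ LinearMap.ker g := hfg ▸ LinearMap.mem_range_self f a
    exact this
  -- the combined map
  set φ : (A × B) →ₗ[ℂ] E :=
    f.comp (LinearMap.fst ℂ A B) + s.comp (LinearMap.snd ℂ A B) with hφ
  have hφapp : ∀ x : A × B, φ x = f x.1 + s x.2 := fun x => rfl
  have hφinj : Function.Injective φ := by
    rw [← LinearMap.ker_eq_bot]
    ext ⟨a, b⟩
    simp only [LinearMap.mem_ker, Submodule.mem_bot, hφapp]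
    constructor
    · intro h
      have hb : b = 0 := by
        have := congrArg g h
        simpa [hgf, hgs] using this
      subst hb
      have ha : a = 0 := hf (by simpa using h)
      simp [ha]
    · intro h
      obtain ⟨rfl, rfl⟩ : a = 0 ∧ b = 0 := by simpa [Prod.ext_iff] using h
      simp
  have hφsurj : Function.Surjective φ := by
    intro e
    have h1 : e - s (g e) ∈ LinearMap.ker g := by simp [hgs]
    rcases (hfg ▸ h1 : _ ∈ LinearMap.range f) with ⟨a, ha⟩
    exact ⟨(a, g e), by simp [hφapp, ha]⟩
  -- the product family
  set P : ℤ × ℤ → Submodule ℂ (A × B) := fun pq => (K pq).prod (J pq) with hP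
  have hmap : ∀ pq, Submodule.map φ (P pq)
      = Submodule.map f (K pq) ⊔ Submodule.map s (J pq) := by
    intro pq
    ext x
    rw [Submodule.mem_sup]
    constructor
    · rintro ⟨⟨a, b⟩, ⟨ha, hb⟩, rfl⟩
      exact ⟨f a, ⟨a, ha, rfl⟩, s b, ⟨b, hb, rfl⟩, rfl⟩
    · rintro ⟨y, ⟨a, ha, rfl⟩, z, ⟨b, hb, rfl⟩, rfl⟩
      exact ⟨(a, b), ⟨ha, hb⟩, rfl⟩
  have hProd : iSupIndep P ∧ iSup P = ⊤ := by
    constructor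
    · intro i
      rw [disjoint_iff]
      rw [eq_bot_iff]
      rintro ⟨a, b⟩ ⟨h1, h2⟩
      have hle : (⨆ j ≠ i, P j) ≤ ((⨆ j ≠ i, K j).prod (⨆ j ≠ i, J j)) := by
        refine iSup₂_le fun j hj => Submodule.prod_mono ?_ ?_
        · exact le_iSup₂ (f := fun j _ => K j) j hj
        · exact le_iSup₂ (f := fun j _ => J j) j hj
      have h2' := hle h2
      have ha : a = 0 := by
        have := (hK.submodule_iSupIndep i).le_bot ⟨h1.1, h2'.1⟩
        simpa using this
      have hb : b = 0 := by
        have := (hJ.submodule_iSupIndep i).le_bot ⟨h1.2, h2'.2⟩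
        simpa using this
      simp [ha, hb, Prod.ext_iff]
    · rw [eq_top_iff]
      rintro ⟨a, b⟩ _
      have ha : (a, (0 : B)) ∈ ⨆ pq, P pq := by
        have h1 : (a, (0 : B)) ∈ Submodule.map (LinearMap.inl ℂ A B) (⨆ pq, K pq) := by
          rw [hK.submodule_iSup_eq_top]
          exact ⟨a, trivial, rfl⟩
        rw [Submodule.map_iSup] at h1
        have hstep : ∀ pq, Submodule.map (LinearMap.inl ℂ A B) (K pq) ≤ P pq := by
          rintro pq x ⟨c, hc, rfl⟩
          exact ⟨hc, Submodule.zero_mem _⟩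
        exact iSup_mono hstep h1
      have hb : ((0 : A), b) ∈ ⨆ pq, P pq := by
        have h1 : ((0 : A), b) ∈ Submodule.map (LinearMap.inr ℂ A B) (⨆ pq, J pq) := by
          rw [hJ.submodule_iSup_eq_top]
          exact ⟨b, trivial, rfl⟩
        rw [Submodule.map_iSup] at h1
        have hstep : ∀ pq, Submodule.map (LinearMap.inr ℂ A B) (J pq) ≤ P pq := by
          rintro pq x ⟨c, hc, rfl⟩
          exact ⟨Submodule.zero_mem _, hc⟩
        exact iSup_mono hstep h1
      have := Submodule.add_mem _ ha hb
      simpa using this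
  constructor
  · rw [DirectSum.isInternal_submodule_iff_iSupIndep_and_iSup_eq_top]
    constructor
    · intro i
      rw [disjoint_iff]
      have key : (⨆ j, ⨆ _ : j ≠ i, (Submodule.map f (K j) ⊔ Submodule.map s (J j)))
          = Submodule.map φ (⨆ j, ⨆ _ : j ≠ i, P j) := by
        simp_rw [← hmap, Submodule.map_iSup]
      calc (Submodule.map f (K i) ⊔ Submodule.map s (J i)) ⊓
            ⨆ j ≠ i, Submodule.map f (K j) ⊔ Submodule.map s (J j)
          = Submodule.map φ (P i) ⊓ Submodule.map φ (⨆ j ≠ i, P j) := by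
            rw [hmap, key]
        _ = Submodule.map φ (P i ⊓ ⨆ j ≠ i, P j) := (Submodule.map_inf φ hφinj).symm
        _ = Submodule.map φ ⊥ := by rw [disjoint_iff.mp (hProd.1 i)]
        _ = ⊥ := Submodule.map_bot φ
    · simp_rw [← hmap, ← Submodule.map_iSup, hProd.2, Submodule.map_top,
        LinearMap.range_eq_top.mpr hφsurj]
  · intro p q
    have hfc : σE.comp (f.restrictScalars ℝ) = (f.restrictScalars ℝ).comp σA := by
      ext a; exact (hfσ a).symm
    have hsc : σE.comp (s.restrictScalars ℝ) = (s.restrictScalars ℝ).comp σB := by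
      ext b; exact (hsσ b).symm
    rw [my_restrictScalars_sup, Submodule.map_sup,
      my_restrictScalars_map (S := ℝ) f, my_restrictScalars_map (S := ℝ) s,
      ← Submodule.map_comp, ← Submodule.map_comp, hfc, hsc,
      Submodule.map_comp, Submodule.map_comp, hKconj, hJconj,
      ← my_restrictScalars_map (S := ℝ) f, ← my_restrictScalars_map (S := ℝ) s,
      my_restrictScalars_sup]
end

section
/- Let 0 → V →^f E →^g W → 0 be a short exact sequence of finitely generated free ℤ-modules (f injective, g surjective, range f = ker g); write V_ℝ = V ⊗ ℝ, etc., and f_ℝ, g_ℝ for the induced ℝ-linear maps. Let s_ℝ : W_ℝ → E_ℝ be an ℝ-linear map with g_ℝ ∘ s_ℝ = id. Let t : Hom_ℝ(V_ℝ, ℝ) → Hom_ℝ(E_ℝ, ℝ) be an ℝ-linear map such that for all β: t(β) ∘ f_ℝ = −β and t(β) ∘ s_ℝ = 0. Let s_ℤ, s'_ℤ : Hom(V, ℤ) → Hom(E, ℤ) be ℤ-linear maps with s_ℤ(α) ∘ f = −α and s'_ℤ(α) ∘ f = −α for all α. Then for every ω ∈ W_ℝ and every α ∈ Hom(V, ℤ):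 the ℝ-linear functional s'_ℤ(α)_ℝ − t(α_ℝ) on E_ℝ vanishes on f_ℝ(V_ℝ), hence equals μ ∘ g_ℝ for a unique μ ∈ Hom_ℝ(W_ℝ, ℝ), and the real number s_ℤ(α)_ℝ(s_ℝ(ω)) − μ(ω) belongs to the subgroup {λ_ℝ(ω) : λ ∈ Hom(W, ℤ)} of ℝ. (This is the paper's Proposition 5.3, the pairing identity ⟨s_ℝ(ω), s_ℤ^∨(α)⟩_E = ⟨ω, s'^∨_ℤ(α) − s_ℝ^∨(α)⟩_W modulo periods, which reduces the main theorem to linear algebra.) -/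
open TensorProduct

/-- The ℝ-linear extension `α_ℝ : M ⊗ ℝ → ℝ` of an integral functional
`α : M → ℤ` on a ℤ-module `M`. -/
noncomputable def extendScalarsℝ {M : Type*} [AddCommGroup M] (α : M →ₗ[ℤ] ℤ) :
    (ℝ ⊗[ℤ] M) →ₗ[ℝ] ℝ :=
  LinearMap.liftBaseChange ℝ ((Int.castAddHom ℝ).toIntLinearMap.comp α)

instance : Module.Flat ℤ ℚ := IsLocalization.flat ℚ (nonZeroDivisors ℤ)
instance : Module.Flat ℤ ℝ := Module.Flat.trans ℤ ℚ ℝ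

lemma extendScalarsℝ_tmul {M : Type*} [AddCommGroup M] (α : M →ₗ[ℤ] ℤ) (r : ℝ) (m : M) :
    extendScalarsℝ α (r ⊗ₜ m) = r * (α m : ℝ) := by
  simp [extendScalarsℝ, LinearMap.liftBaseChange_tmul, smul_eq_mul]

lemma extendScalarsℝ_sub {M : Type*} [AddCommGroup M] (α β : M →ₗ[ℤ] ℤ) :
    extendScalarsℝ (α - β) = extendScalarsℝ α - extendScalarsℝ β := by
  apply LinearMap.ext
  intro x
  induction x using TensorProduct.induction_on with
  | zero => simp
  | tmul r m => simp [extendScalarsℝ_tmul, mul_sub]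
  | add x y hx hy => simp_all [map_add]

lemma extendScalarsℝ_neg {M : Type*} [AddCommGroup M] (α : M →ₗ[ℤ] ℤ) :
    extendScalarsℝ (-α) = -extendScalarsℝ α := by
  apply LinearMap.ext
  intro x
  induction x using TensorProduct.induction_on with
  | zero => simp
  | tmul r m => simp [extendScalarsℝ_tmul, mul_sub]
  | add x y hx hy => simp_all [map_add]

lemma extendScalarsℝ_comp {M N : Type*} [AddCommGroup M] [AddCommGroup N]
    (β : N →ₗ[ℤ] ℤ) (f : M →ₗ[ℤ] N) (x : ℝ ⊗[ℤ] M) :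
    extendScalarsℝ (β.comp f) x = extendScalarsℝ β (f.baseChange ℝ x) := by
  induction x using TensorProduct.induction_on with
  | zero => simp
  | tmul r m => simp [extendScalarsℝ_tmul]
  | add x y hx hy => simp_all [map_add]

/-- **The paper's Proposition 5.3.** Let `0 → V →f E →g W → 0` be a short exact
sequence of finitely generated free ℤ-modules, `s_ℝ` an ℝ-linear section of
`g_ℝ`, `t` the ℝ-linear section of the dual sequence annihilating the image of
`s_ℝ` (the role of Deligne's ℝ-linear section: `t(β) ∘ f_ℝ = −β`,
`t(β) ∘ s_ℝ = 0`), and `s_ℤ, s'_ℤ` ℤ-linear sections of the dual sequence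
(`s_ℤ(α) ∘ f = −α`). Then for every `ω ∈ W_ℝ` and `α ∈ Hom(V,ℤ)`, the
functional `s'_ℤ(α)_ℝ − t(α_ℝ)` vanishes on `f_ℝ(V_ℝ)`, hence equals `μ ∘ g_ℝ`
for a unique `μ`, and `s_ℤ(α)_ℝ(s_ℝ(ω)) − μ(ω)` is a period, i.e. lies in
`{λ_ℝ(ω) : λ ∈ Hom(W,ℤ)}`. -/
theorem pairing_identity
    {V E W : Type*}
    [AddCommGroup V] [Module.Free ℤ V] [Module.Finite ℤ V]
    [AddCommGroup E] [Module.Free ℤ E] [Module.Finite ℤ E]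
    [AddCommGroup W] [Module.Free ℤ W] [Module.Finite ℤ W]
    (f : V →ₗ[ℤ] E) (g : E →ₗ[ℤ] W)
    (hf : Function.Injective f) (hg : Function.Surjective g)
    (hfg : LinearMap.range f = LinearMap.ker g)
    (sR : (ℝ ⊗[ℤ] W) →ₗ[ℝ] (ℝ ⊗[ℤ] E))
    (hsR : (g.baseChange ℝ).comp sR = LinearMap.id)
    (t : ((ℝ ⊗[ℤ] V) →ₗ[ℝ] ℝ) →ₗ[ℝ] ((ℝ ⊗[ℤ] E) →ₗ[ℝ] ℝ))
    (htf : ∀ β : (ℝ ⊗[ℤ] V) →ₗ[ℝ] ℝ, (t β).comp (f.baseChange ℝ) = -β)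
    (hts : ∀ β : (ℝ ⊗[ℤ] V) →ₗ[ℝ] ℝ, (t β).comp sR = 0)
    (sZ sZ' : (V →ₗ[ℤ] ℤ) →ₗ[ℤ] (E →ₗ[ℤ] ℤ))
    (hsZ : ∀ α : V →ₗ[ℤ] ℤ, (sZ α).comp f = -α)
    (hsZ' : ∀ α : V →ₗ[ℤ] ℤ, (sZ' α).comp f = -α)
    (ω : ℝ ⊗[ℤ] W) (α : V →ₗ[ℤ] ℤ) :
    (∀ v : ℝ ⊗[ℤ] V,
      (extendScalarsℝ (sZ' α) - t (extendScalarsℝ α)) (f.baseChange ℝ v) = 0) ∧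
    (∃! μ : (ℝ ⊗[ℤ] W) →ₗ[ℝ] ℝ,
      extendScalarsℝ (sZ' α) - t (extendScalarsℝ α) = μ.comp (g.baseChange ℝ)) ∧
    (∀ μ : (ℝ ⊗[ℤ] W) →ₗ[ℝ] ℝ,
      extendScalarsℝ (sZ' α) - t (extendScalarsℝ α) = μ.comp (g.baseChange ℝ) →
      ∃ lam : W →ₗ[ℤ] ℤ,
        extendScalarsℝ (sZ α) (sR ω) - μ ω = extendScalarsℝ lam ω) := by
  set φ : (ℝ ⊗[ℤ] E) →ₗ[ℝ] ℝ := extendScalarsℝ (sZ' α) - t (extendScalarsℝ α) with hφ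
  -- section property of sR, pointwise
  have hsR' : ∀ w : ℝ ⊗[ℤ] W, g.baseChange ℝ (sR w) = w := fun w =>
    congrArg (fun h => h w) (congrArg DFunLike.coe hsR)
  -- Part 1
  have part1 : ∀ v : ℝ ⊗[ℤ] V, φ (f.baseChange ℝ v) = 0 := by
    intro v
    have h1 : extendScalarsℝ (sZ' α) (f.baseChange ℝ v) = extendScalarsℝ (-α) v := by
      rw [← extendScalarsℝ_comp, hsZ']
    have h2 : t (extendScalarsℝ α) (f.baseChange ℝ v) = -(extendScalarsℝ α) v := by
      have := congrArg (fun h => h v) (congrArg DFunLike.coe (htf (extendScalarsℝ α)))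
      simpa using this
    simp only [hφ, LinearMap.sub_apply, h1, h2, extendScalarsℝ_neg]
    simp
  -- exactness of the base-changed sequence
  have hexZ : Function.Exact f g := LinearMap.exact_iff.mpr hfg.symm
  have hex : ∀ e : ℝ ⊗[ℤ] E, g.baseChange ℝ e = 0 → ∃ v, f.baseChange ℝ v = e := by
    intro e he
    have h := Module.Flat.lTensor_exact ℝ hexZ
    have := (h e).mp (by
      have : (g.lTensor ℝ) e = g.baseChange ℝ e := by
        rw [← LinearMap.baseChange_eq_ltensor]
      rw [this, he])
    obtain ⟨v, hv⟩ := this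
    exact ⟨v, by rw [← hv, ← LinearMap.baseChange_eq_ltensor]⟩
  -- φ vanishes on ker of g_ℝ
  have hker : ∀ e : ℝ ⊗[ℤ] E, g.baseChange ℝ e = 0 → φ e = 0 := by
    intro e he
    obtain ⟨v, hv⟩ := hex e he
    rw [← hv]; exact part1 v
  -- the candidate μ
  set μ₀ : (ℝ ⊗[ℤ] W) →ₗ[ℝ] ℝ := φ.comp sR with hμ₀
  have hfact : φ = μ₀.comp (g.baseChange ℝ) := by
    apply LinearMap.ext
    intro e
    have h0 : g.baseChange ℝ (e - sR (g.baseChange ℝ e)) = 0 := by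
      simp [map_sub, hsR' (g.baseChange ℝ e)]
    have := hker _ h0
    have h1 : φ e = φ (sR (g.baseChange ℝ e)) := by
      have := hker _ h0
      rw [map_sub] at this
      linarith
    simpa [hμ₀] using h1
  refine ⟨part1, ⟨μ₀, hfact, ?_⟩, ?_⟩
  · -- uniqueness
    intro μ hμ
    apply LinearMap.ext
    intro w
    have h1 : φ (sR w) = μ (g.baseChange ℝ (sR w)) := by rw [hμ]; rfl
    rw [hsR' w] at h1
    simp [hμ₀, ← h1]
  · -- Part 3
    intro μ hμ
    -- μ ω = extendScalarsℝ (sZ' α) (sR ω)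
    have hμω : μ ω = extendScalarsℝ (sZ' α) (sR ω) := by
      have h1 : φ (sR ω) = μ (g.baseChange ℝ (sR ω)) := by rw [hμ]; rfl
      rw [hsR' ω] at h1
      have h2 : t (extendScalarsℝ α) (sR ω) = 0 := by
        have := congrArg (fun h => h ω) (congrArg DFunLike.coe (hts (extendScalarsℝ α)))
        simpa using this
      rw [hφ] at h1
      simp only [LinearMap.sub_apply, h2, sub_zero] at h1
      exact h1.symm
    -- the difference δ kills ker g
    set δ : E →ₗ[ℤ] ℤ := sZ α - sZ' α with hδ
    have hδf : δ.comp f = 0 := by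
      rw [hδ, LinearMap.sub_comp, hsZ, hsZ']; simp
    have hkerδ : LinearMap.ker g ≤ LinearMap.ker δ := by
      rw [← hfg]
      rintro _ ⟨v, rfl⟩
      have := congrArg (fun h => h v) (congrArg DFunLike.coe hδf)
      simpa using this
    set e : (E ⧸ LinearMap.ker g) ≃ₗ[ℤ] W := g.quotKerEquivOfSurjective hg with he
    set lam : W →ₗ[ℤ] ℤ :=
      (Submodule.liftQ (LinearMap.ker g) δ hkerδ).comp e.symm.toLinearMap with hlam
    have hcomp : lam.comp g = δ := by
      apply LinearMap.ext
      intro x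
      have hemk : e (Submodule.Quotient.mk x) = g x := rfl
      have : e.symm (g x) = Submodule.Quotient.mk x := by
        rw [LinearEquiv.symm_apply_eq, hemk]
      simp [hlam, this]
    refine ⟨lam, ?_⟩
    have key : extendScalarsℝ δ (sR ω) = extendScalarsℝ lam ω := by
      rw [← hcomp, extendScalarsℝ_comp, hsR' ω]
    rw [hδ, extendScalarsℝ_sub] at key
    simp only [LinearMap.sub_apply] at key
    rw [hμω]
    linarith
end

section
/- Let 0 → A →^f E →^g B → 0 and 0 → B' →^p E' →^q A' → 0 be short exact sequences of finitely generated free ℤ-modules. Let ⟨,⟩_E : E × E' → ℤ, ⟨,⟩_A : A × A' → ℤ, and ⟨,⟩_B : B × B' → ℤ be ℤ-bilinear pairings satisfying the compatibilities ⟨f(a), e'⟩_E = −⟨a, q(e')⟩_A for all a ∈ A, e' ∈ E', and ⟨e, p(b')⟩_E = ⟨g(e), b'⟩_B for all e ∈ E, b' ∈ B'. If ⟨,⟩_A and ⟨,⟩_B are unimodular (the induced maps A → Hom(A', ℤ) and B → Hom(B', ℤ) are isomorphisms), then ⟨,⟩_E is unimodular (the induced map E → Hom(E', ℤ) is an isomorphism).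 (This is the principle underlying the paper's Proposition 2.9(i): unimodularity of the pairing between two long exact sequences is preserved when passing to kernels and cokernels.) -/
/-- **Principle behind the paper's Proposition 2.9(i).** Given short exact
sequences `0 → A →f E →g B → 0` and `0 → B' →p E' →q A' → 0` of finitely
generated free ℤ-modules and compatible bilinear pairings
(`⟨f(a), e'⟩_E = −⟨a, q(e')⟩_A` and `⟨e, p(b')⟩_E = ⟨g(e), b'⟩_B`), if the
pairings on `A × A'` and `B × B'` are unimodular then so is the pairing on
`E × E'`. -/
theorem unimodular_of_extension
    {A E B B' E' A' : Type*}
    [AddCommGroup A] [Module.Free ℤ A] [Module.Finite ℤ A]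
    [AddCommGroup E] [Module.Free ℤ E] [Module.Finite ℤ E]
    [AddCommGroup B] [Module.Free ℤ B] [Module.Finite ℤ B]
    [AddCommGroup B'] [Module.Free ℤ B'] [Module.Finite ℤ B']
    [AddCommGroup E'] [Module.Free ℤ E'] [Module.Finite ℤ E']
    [AddCommGroup A'] [Module.Free ℤ A'] [Module.Finite ℤ A']
    (f : A →ₗ[ℤ] E) (g : E →ₗ[ℤ] B)
    (hf : Function.Injective f) (hg : Function.Surjective g)
    (hfg : LinearMap.range f = LinearMap.ker g)
    (p : B' →ₗ[ℤ] E') (q : E' →ₗ[ℤ] A')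
    (hp : Function.Injective p) (hq : Function.Surjective q)
    (hpq : LinearMap.range p = LinearMap.ker q)
    (bE : E →ₗ[ℤ] E' →ₗ[ℤ] ℤ)
    (bA : A →ₗ[ℤ] A' →ₗ[ℤ] ℤ)
    (bB : B →ₗ[ℤ] B' →ₗ[ℤ] ℤ)
    (hcompat₁ : ∀ (a : A) (e' : E'), bE (f a) e' = - bA a (q e'))
    (hcompat₂ : ∀ (e : E) (b' : B'), bE e (p b') = bB (g e) b')
    (hbA : Function.Bijective bA)
    (hbB : Function.Bijective bB) :
    Function.Bijective bE := by
  constructor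
  · -- injectivity
    have key : ∀ e : E, bE e = 0 → e = 0 := by
      intro e he
      have hgB : bB (g e) = 0 := by
        ext b'
        have := hcompat₂ e b'
        simp [he] at this
        simp [← this]
      have hge : g e = 0 := hbB.injective (by simpa using hgB)
      have hmem : e ∈ LinearMap.range f := by
        rw [hfg]; exact hge
      obtain ⟨a, ha⟩ := hmem
      have hA0 : bA a = 0 := by
        ext a'
        obtain ⟨e', he'⟩ := hq a'
        have := hcompat₁ a e'
        rw [ha, he, he'] at this
        simpa using this.symm
      have : a = 0 := hbA.injective (by simpa using hA0)
      rw [← ha, this, map_zero]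
    intro e₁ e₂ h
    have := key (e₁ - e₂) (by rw [map_sub, h, sub_self])
    exact sub_eq_zero.mp this
  · -- surjectivity
    intro φ
    obtain ⟨b, hb⟩ := hbB.surjective (φ.comp p)
    obtain ⟨e₀, he₀⟩ := hg b
    set ψ : E' →ₗ[ℤ] ℤ := φ - bE e₀ with hψ
    have hψp : ∀ b', ψ (p b') = 0 := by
      intro b'
      have h1 : bE e₀ (p b') = bB b b' := by rw [hcompat₂, he₀]
      have h2 : φ (p b') = bB b b' := by rw [hb]; rfl
      simp [hψ, h1, h2]
    obtain ⟨s, hs⟩ := Module.projective_lifting_property q (LinearMap.id : A' →ₗ[ℤ] A') hq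
    set χ : A' →ₗ[ℤ] ℤ := ψ.comp s with hχ
    have hχq : ∀ e', χ (q e') = ψ e' := by
      intro e'
      have hker : e' - s (q e') ∈ LinearMap.ker q := by
        simp only [LinearMap.mem_ker, map_sub]
        have : q (s (q e')) = q e' := by
          have := congrArg (fun m => m (q e')) hs
          simpa using this
        rw [this, sub_self]
      rw [← hpq] at hker
      obtain ⟨b', hb'⟩ := hker
      have h0 : ψ (e' - s (q e')) = 0 := by rw [← hb']; exact hψp b'
      have : ψ e' - ψ (s (q e')) = 0 := by rw [← map_sub]; exact h0
      have h2 : ψ (s (q e')) = ψ e' := by linarith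
      simpa [hχ] using h2
    obtain ⟨a, ha⟩ := hbA.surjective (-χ)
    refine ⟨f a + e₀, ?_⟩
    ext e'
    have h1 : bE (f a) e' = χ (q e') := by
      rw [hcompat₁, ha]; simp
    have h2 : χ (q e') = φ e' - bE e₀ e' := by rw [hχq]; simp [hψ]
    simp only [map_add, LinearMap.add_apply, h1, h2]
    ring
end
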